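/- Let G be a connected n-vertex graph with minimum degree strictly greater than n/3 such that every vertex of G belongs to a triangle. Then for any two vertices u and v of G there is a trail from u to v of even length at most 8. -/
import Mathlib


open Finset
open scoped Classical

/-- The degree of a vertex (number of neighbours). -/
noncomputable def degR {V : Type*} (G : SimpleGraph V) (v : V) : ℕ :=
  Nat.card (G.neighborSet v)

/-- The number of edges of a graph on `Fin n`. -/
noncomputable def edgeCount {n : ℕ} (H : SimpleGraph (Fin n)) : ℕ := Nat.card H.edgeSet

/-- The probability that the binomial random graph `G_{n,p}` satisfies the property `P`. -/
noncomputable def Pr (n : ℕ) (p : ℝ) (P : SimpleGraph (Fin n) → Prop) : ℝ :=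
  ∑ H : SimpleGraph (Fin n),
    if P H then p ^ edgeCount H * (1 - p) ^ (n.choose 2 - edgeCount H) else 0

/-- `G` has a `K_r`-factor: a partition of the vertex set into `r`-cliques. -/
def HasCliqueFactor {n : ℕ} (G : SimpleGraph (Fin n)) (r : ℕ) : Prop :=
  ∃ P : Finpartition (Finset.univ : Finset (Fin n)), ∀ c ∈ P.parts, G.IsNClique r c

/-- The threshold function `p_s(n)`: `log n / n` if `s = 2` and `n^{-φ(s)}` with
`φ(s) = 2s/((s-1)(s+2))` if `s ≥ 3`. -/
noncomputable def pThr (s n : ℕ) : ℝ :=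
  if s = 2 then Real.log n / n
  else (n : ℝ) ^ (-(2 * (s : ℝ)) / (((s : ℝ) - 1) * ((s : ℝ) + 2)))

/-- The number of edges of `G` within the vertex set `S`. -/
noncomputable def edgesIn {V : Type*} (G : SimpleGraph V) (S : Set V) : ℕ :=
  Nat.card {e : Sym2 V // e ∈ G.edgeSet ∧ ∀ v ∈ e, v ∈ S}

/-- The number of ordered adjacent pairs between `S` and `T`. -/
noncomputable def edgesBtw {V : Type*} (G : SimpleGraph V) (S T : Set V) : ℕ :=
  Nat.card {p : V × V // p.1 ∈ S ∧ p.2 ∈ T ∧ G.Adj p.1 p.2}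

/-- The edge density of the pair `(S, T)` in `G`. -/
noncomputable def density {V : Type*} (G : SimpleGraph V) (S T : Set V) : ℝ :=
  (edgesBtw G S T : ℝ) / ((S.ncard : ℝ) * (T.ncard : ℝ))

/-- The pair `(S, T)` is `(ε, d)`-regular in `G`. -/
def IsRegularPair {V : Type*} (G : SimpleGraph V) (S T : Set V) (ε d : ℝ) : Prop :=
  ∀ X ⊆ S, ∀ Y ⊆ T, ε * S.ncard ≤ (X.ncard : ℝ) → ε * T.ncard ≤ (Y.ncard : ℝ) →
    |density G X Y - d| < ε

/-- The pair `(S, T)` is `(ε, d, ϑ)`-super-regular in `G`. -/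
def IsSuperRegularPair {V : Type*} (G : SimpleGraph V) (S T : Set V) (ε d ϑ : ℝ) : Prop :=
  IsRegularPair G S T ε d ∧
  (∀ v ∈ S, ϑ * T.ncard ≤ ((T ∩ G.neighborSet v).ncard : ℝ)) ∧
  (∀ v ∈ T, ϑ * S.ncard ≤ ((S ∩ G.neighborSet v).ncard : ℝ))


lemma myLengthDrop {V : Type*} {G : SimpleGraph V} {u v : V} (p : G.Walk u v) (n : ℕ) :
    (p.drop n).length = p.length - n := by
  induction p generalizing n with
  | nil => cases n <;> simp [SimpleGraph.Walk.drop]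
  | cons h q ih =>
    cases n with
    | zero => simp [SimpleGraph.Walk.drop]
    | succ n => simpa [SimpleGraph.Walk.drop] using ih n

lemma myDistGetVertLe {V : Type*} {G : SimpleGraph V} {u v : V} (p : G.Walk u v) {i : ℕ}
    (hi : i ≤ p.length) : G.dist u (p.getVert i) ≤ i := by
  have h1 : p.reverse.getVert (p.length - i) = p.getVert i := by
    rw [SimpleGraph.Walk.getVert_reverse]
    congr 1
    omega
  have h2 := SimpleGraph.dist_le ((p.reverse.drop (p.length - i)).copy h1 rfl)
  rw [SimpleGraph.Walk.length_copy, myLengthDrop, SimpleGraph.Walk.length_reverse] at h2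
  rw [SimpleGraph.dist_comm]
  omega

lemma myDistGetVertRight {V : Type*} {G : SimpleGraph V} {u v : V} (p : G.Walk u v) (i : ℕ) :
    G.dist (p.getVert i) v ≤ p.length - i := by
  have h2 := SimpleGraph.dist_le (p.drop i)
  rwa [myLengthDrop] at h2

lemma myDegR {n : ℕ} (G : SimpleGraph (Fin n)) (v : Fin n) : degR G v = G.degree v := by
  rw [degR, Nat.card_eq_fintype_card]
  exact SimpleGraph.card_neighborSet_eq_degree G v

lemma myDistLeFive {n : ℕ} (G : SimpleGraph (Fin n)) (hconn : G.Connected)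
    (hdeg : ∀ v, (n : ℝ) / 3 < (degR G v : ℝ)) (u v : Fin n) : G.dist u v ≤ 5 := by
  by_contra hgt
  push_neg at hgt
  obtain ⟨p, hp⟩ := hconn.exists_walk_length_eq_dist u v
  have hdeg' : ∀ x : Fin n, n < 3 * G.degree x := by
    intro x
    have h := hdeg x
    rw [myDegR] at h
    have : (n : ℝ) < 3 * (G.degree x : ℝ) := by linarith
    exact_mod_cast this
  have h3le : G.dist u (p.getVert 3) ≤ 3 := myDistGetVertLe p (by omega)
  have h6le : G.dist u (p.getVert 6) ≤ 6 := myDistGetVertLe p (by omega)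
  have h3r := myDistGetVertRight p 3
  have h6r := myDistGetVertRight p 6
  have t1 : G.dist u v ≤ G.dist u (p.getVert 3) + G.dist (p.getVert 3) v := hconn.dist_triangle
  have t2 : G.dist u v ≤ G.dist u (p.getVert 6) + G.dist (p.getVert 6) v := hconn.dist_triangle
  have t3 : G.dist u v ≤ G.dist u (p.getVert 3) +
      (G.dist (p.getVert 3) (p.getVert 6) + G.dist (p.getVert 6) v) :=
    le_trans hconn.dist_triangle (by gcongr; exact hconn.dist_triangle)
  have h03 : 3 ≤ G.dist u (p.getVert 3) := by omega
  have h06 : 3 ≤ G.dist u (p.getVert 6) := by omega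
  have h36 : 3 ≤ G.dist (p.getVert 3) (p.getVert 6) := by omega
  let Nc : Fin n → Finset (Fin n) := fun x => insert x (G.neighborFinset x)
  have hcard : ∀ x, (Nc x).card = G.degree x + 1 := by
    intro x
    rw [Finset.card_insert_of_notMem (G.notMem_neighborFinset_self x)]
    rfl
  have hdisj : ∀ x y : Fin n, 3 ≤ G.dist x y → Disjoint (Nc x) (Nc y) := by
    intro x y hxy
    rw [Finset.disjoint_left]
    intro w hwx hwy
    have hx : G.dist x w ≤ 1 := by
      rcases Finset.mem_insert.1 hwx with h | h
      · subst h; simp [SimpleGraph.dist_self]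
      · exact le_of_eq (SimpleGraph.dist_eq_one_iff_adj.2
          ((SimpleGraph.mem_neighborFinset _ _ _).1 h))
    have hy : G.dist w y ≤ 1 := by
      rcases Finset.mem_insert.1 hwy with h | h
      · subst h; simp [SimpleGraph.dist_self]
      · rw [SimpleGraph.dist_comm]
        exact le_of_eq (SimpleGraph.dist_eq_one_iff_adj.2
          ((SimpleGraph.mem_neighborFinset _ _ _).1 h))
    have := hconn.dist_triangle (u := x) (v := w) (w := y)
    omega
  have d03 := hdisj u (p.getVert 3) h03
  have d06 := hdisj u (p.getVert 6) h06
  have d36 := hdisj (p.getVert 3) (p.getVert 6) h36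
  have hun : (Nc u ∪ Nc (p.getVert 3) ∪ Nc (p.getVert 6)).card =
      (Nc u).card + (Nc (p.getVert 3)).card + (Nc (p.getVert 6)).card := by
    rw [Finset.card_union_of_disjoint (by rw [Finset.disjoint_union_left]; exact ⟨d06, d36⟩),
        Finset.card_union_of_disjoint d03]
  have hle : (Nc u ∪ Nc (p.getVert 3) ∪ Nc (p.getVert 6)).card ≤ n := by
    simpa using Finset.card_le_univ (Nc u ∪ Nc (p.getVert 3) ∪ Nc (p.getVert 6))
  have hu' := hdeg' u
  have h3' := hdeg' (p.getVert 3)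
  have h6' := hdeg' (p.getVert 6)
  rw [hun, hcard, hcard, hcard] at hle
  omega

/-- Lemma 9.2: in a connected `n`-vertex graph with minimum degree greater
than `n/3` in which every vertex lies in a triangle, any two vertices are joined by a walk
("trail" in the paper: vertices may repeat) of even length at most 8. -/
theorem statement18 (n : ℕ) (G : SimpleGraph (Fin n)) (hconn : G.Connected)
    (hdeg : ∀ v, (n : ℝ) / 3 < (degR G v : ℝ))
    (htri : ∀ v, ∃ a b : Fin n, G.Adj v a ∧ G.Adj v b ∧ G.Adj a b) :
    ∀ u v : Fin n, ∃ w : G.Walk u v, Even w.length ∧ w.length ≤ 8 := by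
  intro u v
  have hd := myDistLeFive G hconn hdeg u v
  obtain ⟨p, hp⟩ := hconn.exists_walk_length_eq_dist u v
  by_cases he : Even p.length
  · exact ⟨p, he, by omega⟩
  · obtain ⟨a, b, h1, h2, h3⟩ := htri u
    refine ⟨.cons h1 (.cons h3 (.cons h2.symm p)), ?_, ?_⟩
    · have hodd : p.length % 2 = 1 := Nat.not_even_iff.1 he
      rw [Nat.even_iff]
      simp only [SimpleGraph.Walk.length_cons]
      omega
    · simp only [SimpleGraph.Walk.length_cons]
      omega
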